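/- Let k be a positive integer and let G_k be the claw-free graph obtained from a complete graph H_0 on vertex set {v_1, …, v_{k+3}} and k pairwise disjoint copies H_1, …, H_k of K_{k+2} by joining every vertex of H_i to v_i for each i ∈ {1, …, k}. Then every 2-factor of G_k has at least k + 1 cycles; indeed, each of v_1, …, v_k is a cut vertex of G_k and G_k − {v_1, …, v_k} has exactly k + 1 connected components. -/

import Mathlib

/-- A graph is claw-free if it contains no induced subgraph isomorphic to `K_{1,3}`. -/
def ClawFree {V : Type*} (G : SimpleGraph V) : Prop :=
  ¬ ∃ v a b c : V, a ≠ b ∧ a ≠ c ∧ b ≠ c ∧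
    G.Adj v a ∧ G.Adj v b ∧ G.Adj v c ∧ ¬ G.Adj a b ∧ ¬ G.Adj a c ∧ ¬ G.Adj b c

/-- A finset of vertices is an independent set of `G` if no two of its vertices
are adjacent. -/
def IsIndepFinset {V : Type*} (G : SimpleGraph V) (I : Finset V) : Prop :=
  ∀ a ∈ I, ∀ b ∈ I, ¬ G.Adj a b

/-- A 2-factor of `G` is a 2-regular spanning subgraph of `G`. -/
def IsTwoFactor {V : Type*} (G : SimpleGraph V) (F : G.Subgraph) : Prop :=
  F.IsSpanning ∧ ∀ v : V, (F.neighborSet v).ncard = 2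

/-- The vertex set of the graph `G_k`: the complete graph `H_0` on `k + 3` vertices
`v_1, …, v_{k+3}` (given by `Sum.inl`), together with `k` disjoint copies
`H_1, …, H_k` of `K_{k+2}` (the copy `H_i` consists of the vertices `Sum.inr (i, a)`). -/
abbrev GkVertex (k : ℕ) : Type := Fin (k + 3) ⊕ Fin k × Fin (k + 2)

/-- The base relation for `G_k`: all pairs inside `H_0` are related, two vertices of the
copies are related iff they lie in the same copy `H_i`, and `v_i ∈ H_0` is related to
every vertex of the copy `H_i`. -/
def GkRel (k : ℕ) : GkVertex k → GkVertex k → Prop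
  | Sum.inl _, Sum.inl _ => True
  | Sum.inr ⟨i, _⟩, Sum.inr ⟨j, _⟩ => i = j
  | Sum.inl i, Sum.inr ⟨j, _⟩ => (i : ℕ) = (j : ℕ)
  | Sum.inr _, Sum.inl _ => False

/-- The graph `G_k`, obtained from a complete graph `H_0` on vertices `v_1, …, v_{k+3}`
and `k` pairwise disjoint copies `H_1, …, H_k` of `K_{k+2}` by joining every vertex of
`H_i` to `v_i` for each `i ∈ {1, …, k}`. -/
def Gk (k : ℕ) : SimpleGraph (GkVertex k) := SimpleGraph.fromRel (GkRel k)


section GkHelpers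

lemma gk_adj_inl_inl {k : ℕ} {u w : Fin (k+3)} :
    (Gk k).Adj (Sum.inl u) (Sum.inl w) ↔ u ≠ w := by
  simp [Gk, SimpleGraph.fromRel_adj, GkRel]

lemma gk_adj_inl_inr {k : ℕ} {u : Fin (k+3)} {j : Fin k} {b : Fin (k+2)} :
    (Gk k).Adj (Sum.inl u) (Sum.inr (j,b)) ↔ (u : ℕ) = (j : ℕ) := by
  constructor
  · rintro ⟨hne, h | h⟩
    · exact h
    · exact h.elim
  · rintro h
    exact ⟨by simp, Or.inl h⟩

lemma gk_adj_inr_inr {k : ℕ} {i j : Fin k} {a b : Fin (k+2)} :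
    (Gk k).Adj (Sum.inr (i,a)) (Sum.inr (j,b)) ↔ (i,a) ≠ (j,b) ∧ i = j := by
  constructor
  · rintro ⟨hne, h | h⟩
    · exact ⟨by simpa using hne, h⟩
    · exact ⟨by simpa using hne, h.symm⟩
  · rintro ⟨hne, rfl⟩
    exact ⟨by simpa using hne, Or.inl rfl⟩

/-- Neighbor classification: a `G_k`-neighbor of a vertex of `H_i` is in `H_i` or is `v_i`. -/
lemma gk_nbr {k : ℕ} {i : Fin k} {a : Fin (k+2)} {y : GkVertex k}
    (h : (Gk k).Adj (Sum.inr (i,a)) y) :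
    (∃ b, y = Sum.inr (i,b)) ∨ y = Sum.inl (Fin.castLE (Nat.le_add_right k 3) i) := by
  rcases y with u | ⟨j,b⟩
  · right
    have hu : (u : ℕ) = (i : ℕ) := gk_adj_inl_inr.mp h.symm
    exact congrArg Sum.inl (Fin.ext (by simpa using hu))
  · left
    have := (gk_adj_inr_inr.mp h).2
    exact ⟨b, by rw [this]⟩

/-- Generic walk-invariant principle. -/
lemma walk_ind {V : Type*} {H : SimpleGraph V} (P : V → Prop)
    (hP : ∀ ⦃x y : V⦄, P x → H.Adj x y → P y) {x y : V}
    (h : H.Reachable x y) : P x → P y := by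
  obtain ⟨w⟩ := h
  induction w with
  | nil => exact id
  | cons h _ ih => exact fun hx => ih (hP hx h)

/-- Parity: the two `F`-neighbors of `v_i` are either all in `H_i` or all outside. -/
lemma gk_parity {k : ℕ} (F : (Gk k).Subgraph)
    (hdeg : ∀ v, (F.neighborSet v).ncard = 2) (i : Fin k) :
    (∀ y, F.Adj (Sum.inl (Fin.castLE (Nat.le_add_right k 3) i)) y → ∃ a, y = Sum.inr (i, a)) ∨
    (∀ a : Fin (k+2), ¬ F.Adj (Sum.inl (Fin.castLE (Nat.le_add_right k 3) i)) (Sum.inr (i, a))) := by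
  classical
  set vi : GkVertex k := Sum.inl (Fin.castLE (Nat.le_add_right k 3) i) with hvi
  let Nv : GkVertex k → Finset (GkVertex k) := fun v => (F.neighborSet v).toFinset
  have hNv : ∀ v, (Nv v).card = 2 := by
    intro v
    rw [← Set.ncard_eq_toFinset_card']
    exact hdeg v
  have hmemNv : ∀ v y, y ∈ Nv v ↔ F.Adj v y := by
    intro v y; simp [Nv, SimpleGraph.Subgraph.mem_neighborSet]
  let A : Set (GkVertex k) := {x | ∃ a, x = Sum.inr (i,a)}
  have hviA : vi ∉ A := by rintro ⟨a, h⟩; simp [hvi] at h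
  let H' : SimpleGraph (GkVertex k) :=
    { Adj := fun x y => x ∈ A ∧ y ∈ A ∧ F.Adj x y
      symm := ⟨fun x y ⟨hx, hy, h⟩ => ⟨hy, hx, h.symm⟩⟩
      loopless := ⟨fun x ⟨_, _, h⟩ => (Gk k).loopless.irrefl x (F.adj_sub h)⟩ }
  have heven : Even (∑ v, H'.degree v) := by
    rw [SimpleGraph.sum_degrees_eq_twice_card_edges]
    exact even_two_mul _
  let s : Finset (GkVertex k) := Finset.univ.filter (· ∈ A)
  have hdegH : ∀ x ∈ s, H'.degree x = 2 - (if vi ∈ Nv x then 1 else 0) := by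
    intro x hx
    have hxA : x ∈ A := (Finset.mem_filter.mp hx).2
    have h1 : H'.neighborFinset x = (Nv x).erase vi := by
      ext y
      simp only [SimpleGraph.mem_neighborFinset, Finset.mem_erase, hmemNv]
      constructor
      · rintro ⟨-, hyA, h⟩
        exact ⟨fun he => hviA (he ▸ hyA), h⟩
      · rintro ⟨hne, h⟩
        obtain ⟨a, ha⟩ := hxA
        subst ha
        rcases gk_nbr (F.adj_sub h) with hy | hy
        · exact ⟨⟨a, rfl⟩, hy, h⟩
        · exact absurd hy hne
    rw [SimpleGraph.degree, h1, Finset.card_erase_eq_ite]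
    rw [hNv x]
    split <;> simp
  have hdegH0 : ∀ x ∉ s, H'.degree x = 0 := by
    intro x hx
    have hxA : x ∉ A := fun h => hx (Finset.mem_filter.mpr ⟨Finset.mem_univ _, h⟩)
    simp only [SimpleGraph.degree, Finset.card_eq_zero, Finset.eq_empty_iff_forall_notMem]
    intro y hy
    exact hxA (SimpleGraph.mem_neighborFinset _ _ _ |>.mp hy).1
  have hsum : ∑ v, H'.degree v = ∑ x ∈ s, (2 - (if vi ∈ Nv x then 1 else 0)) := by
    rw [← Finset.sum_subset (Finset.subset_univ s)]
    · exact Finset.sum_congr rfl hdegH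
    · exact fun x _ hx => hdegH0 x hx
  set t : ℕ := (s.filter (fun x => vi ∈ Nv x)).card with ht
  have hind : ∑ x ∈ s, (if vi ∈ Nv x then 1 else 0) = t := (Finset.card_filter _ _).symm
  have hkey : ∑ x ∈ s, (2 - (if vi ∈ Nv x then 1 else 0)) + t = 2 * s.card := by
    rw [← hind, ← Finset.sum_add_distrib]
    have : ∀ x ∈ s, (2 - (if vi ∈ Nv x then 1 else 0)) + (if vi ∈ Nv x then 1 else 0) = 2 := by
      intro x _; split <;> rfl
    rw [Finset.sum_congr rfl this, Finset.sum_const, smul_eq_mul, mul_comm]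
  have htle : t ≤ 2 := by
    have hsub : s.filter (fun x => vi ∈ Nv x) ⊆ Nv vi := by
      intro x hx
      have := (Finset.mem_filter.mp hx).2
      rw [hmemNv] at this ⊢
      exact this.symm
    calc t ≤ (Nv vi).card := Finset.card_le_card hsub
    _ = 2 := hNv vi
  obtain ⟨m, hm⟩ := heven
  rw [hsum] at hm
  have ht02 : t = 0 ∨ t = 2 := by omega
  rcases ht02 with h02 | h02
  · right
    intro a hadj
    have hmem : (Sum.inr (i,a) : GkVertex k) ∈ s.filter (fun x => vi ∈ Nv x) := by
      refine Finset.mem_filter.mpr ⟨Finset.mem_filter.mpr ⟨Finset.mem_univ _, ⟨a, rfl⟩⟩, ?_⟩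
      rw [hmemNv]
      exact hadj.symm
    rw [ht] at h02
    rw [Finset.card_eq_zero] at h02
    rw [h02] at hmem
    exact Finset.notMem_empty _ hmem
  · left
    intro y hy
    have hysub : s.filter (fun x => vi ∈ Nv x) = Nv vi := by
      apply Finset.eq_of_subset_of_card_le
      · intro x hx
        have := (Finset.mem_filter.mp hx).2
        rw [hmemNv] at this ⊢
        exact this.symm
      · rw [hNv vi, ← ht, h02]
    have hyN : y ∈ Nv vi := (hmemNv _ _).mpr hy
    rw [← hysub] at hyN
    exact (Finset.mem_filter.mp (Finset.mem_filter.mp hyN).1).2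

/-- Components of a 2-factor containing a vertex of `H_i` stay within `H_i ∪ {v_i}`. -/
lemma gk_confine {k : ℕ} (F : (Gk k).Subgraph)
    (hdeg : ∀ v, (F.neighborSet v).ncard = 2) (i : Fin k) {y : GkVertex k}
    (h : F.spanningCoe.Reachable (Sum.inr (i, 0)) y) :
    (∃ a, y = Sum.inr (i, a)) ∨ y = Sum.inl (Fin.castLE (Nat.le_add_right k 3) i) := by
  rcases gk_parity F hdeg i with hp | hp
  · refine walk_ind (fun x => (∃ a, x = Sum.inr (i, a)) ∨
      x = Sum.inl (Fin.castLE (Nat.le_add_right k 3) i)) ?_ h (Or.inl ⟨0, rfl⟩)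
    rintro x z (⟨a, rfl⟩ | rfl) hadj
    · exact gk_nbr (F.adj_sub hadj)
    · exact Or.inl (hp _ hadj)
  · refine Or.inl (walk_ind (fun x => ∃ a, x = Sum.inr (i, a)) ?_ h ⟨0, rfl⟩)
    rintro x z ⟨a, rfl⟩ hadj
    rcases gk_nbr (F.adj_sub hadj) with hy | rfl
    · exact hy
    · exact absurd hadj.symm (hp a)

end GkHelpers
/-- Every 2-factor of `G_k` has at least `k + 1` cycles; indeed, `G_k` is connected,
each of `v_1, …, v_k` is a cut vertex of `G_k`, and `G_k - {v_1, …, v_k}` has exactly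
`k + 1` connected components. -/
theorem Gk_two_factor_many_cycles (k : ℕ) (hk : 1 ≤ k) :
    -- every 2-factor of `G_k` has at least `k + 1` cycles
    (∀ F : (Gk k).Subgraph, IsTwoFactor (Gk k) F →
      k + 1 ≤ Nat.card F.coe.ConnectedComponent) ∧
    -- `G_k` is connected
    (Gk k).Connected ∧
    -- each `v_i`, `i ∈ {1, …, k}`, is a cut vertex of `G_k`
    (∀ i : Fin k,
      ¬ ((Gk k).induce
        {x : GkVertex k | x ≠ Sum.inl (Fin.castLE (by omega) i)}).Connected) ∧
    -- `G_k - {v_1, …, v_k}` has exactly `k + 1` connected components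
    Nat.card ((Gk k).induce
      {x : GkVertex k | ∀ i : Fin k,
        x ≠ Sum.inl (Fin.castLE (by omega) i)}).ConnectedComponent = k + 1 := by
  constructor
  · -- Part 1: every 2-factor has at least k+1 components
    rintro F ⟨hspan, hdeg⟩
    have hcard : Nat.card F.coe.ConnectedComponent
        = Nat.card F.spanningCoe.ConnectedComponent :=
      Nat.card_congr ((F.spanningCoeEquivCoeOfSpanning hspan).connectedComponentEquiv).symm
    rw [hcard]
    have h1 : ∀ j j' : Fin k,
        F.spanningCoe.Reachable (Sum.inr (j,0)) (Sum.inr (j',0)) → j = j' := by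
      intro j j' h
      rcases gk_confine F hdeg j h with ⟨a, ha⟩ | ha
      · exact (congrArg Prod.fst (Sum.inr.inj ha)).symm
      · simp at ha
    have h2 : ∀ j : Fin k,
        ¬ F.spanningCoe.Reachable (Sum.inr (j,0))
          (Sum.inl (⟨k+2, by omega⟩ : Fin (k+3))) := by
      intro j h
      rcases gk_confine F hdeg j h with ⟨a, ha⟩ | ha
      · simp at ha
      · have hv := congrArg Fin.val (Sum.inl.inj ha)
        simp at hv
        have := j.isLt
        omega
    refine le_trans ?_ (Nat.card_le_card_of_injective
      (fun p : Fin (k+1) => Fin.lastCases (motive := fun _ => F.spanningCoe.ConnectedComponent)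
        (F.spanningCoe.connectedComponentMk (Sum.inl ⟨k+2, by omega⟩))
        (fun j => F.spanningCoe.connectedComponentMk (Sum.inr (j, 0))) p) ?_)
    · simp
    · intro p q
      induction p using Fin.lastCases with
      | last =>
        induction q using Fin.lastCases with
        | last => intro _; rfl
        | cast j =>
          intro heq
          simp only [Fin.lastCases_last, Fin.lastCases_castSucc] at heq
          exact absurd (SimpleGraph.ConnectedComponent.exact heq).symm (h2 j)
      | cast j =>
        induction q using Fin.lastCases with
        | last =>
          intro heq
          simp only [Fin.lastCases_last, Fin.lastCases_castSucc] at heq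
          exact absurd (SimpleGraph.ConnectedComponent.exact heq) (h2 j)
        | cast j' =>
          intro heq
          simp only [Fin.lastCases_castSucc] at heq
          rw [h1 j j' (SimpleGraph.ConnectedComponent.exact heq)]
  refine ⟨?_, ?_, ?_⟩
  · -- Part 2: G_k is connected
    have hinl0 : ∀ u : Fin (k+3), (Gk k).Reachable (Sum.inl u) (Sum.inl 0) := by
      intro u
      by_cases h : u = 0
      · exact h ▸ SimpleGraph.Reachable.refl _
      · exact (gk_adj_inl_inl.mpr h).reachable
    have hub : ∀ x : GkVertex k, (Gk k).Reachable x (Sum.inl 0) := by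
      rintro (u | ⟨j, a⟩)
      · exact hinl0 u
      · refine (SimpleGraph.Adj.reachable ?_).trans (hinl0 (Fin.castLE (by omega) j))
        exact (gk_adj_inl_inr.mpr (by simp)).symm
    have : Nonempty (GkVertex k) := ⟨Sum.inl 0⟩
    exact SimpleGraph.Connected.mk (fun x y => (hub x).trans (hub y).symm)
  · -- Part 3: each v_i is a cut vertex
    intro i hconn
    have hx : (Sum.inr (i, 0) : GkVertex k) ∈
        {x : GkVertex k | x ≠ Sum.inl (Fin.castLE (by omega) i)} := by simp
    have hy : (Sum.inl (⟨k+2, by omega⟩ : Fin (k+3)) : GkVertex k) ∈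
        {x : GkVertex k | x ≠ Sum.inl (Fin.castLE (by omega) i)} := by
      simp only [Set.mem_setOf_eq, ne_eq, Sum.inl.injEq]
      intro h
      have hv := congrArg Fin.val h
      simp at hv
      have := i.isLt
      omega
    have hr := hconn.preconnected ⟨_, hx⟩ ⟨_, hy⟩
    have step : ∀ ⦃x y : {x : GkVertex k | x ≠ Sum.inl (Fin.castLE (by omega) i)}⦄,
        (∃ a, x.1 = Sum.inr (i, a)) →
        ((Gk k).induce {x : GkVertex k | x ≠ Sum.inl (Fin.castLE (by omega) i)}).Adj x y →
        ∃ a, y.1 = Sum.inr (i, a) := by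
      rintro ⟨x, hxS⟩ ⟨y, hyS⟩ ⟨a, ha⟩ hadj
      dsimp only at ha
      subst ha
      rcases gk_nbr (show (Gk k).Adj (Sum.inr (i,a)) y from hadj) with hy' | hy'
      · exact hy'
      · exact absurd hy' hyS
    obtain ⟨a, ha⟩ := walk_ind _ step hr ⟨0, rfl⟩
    simp at ha
  · -- Part 4: exactly k+1 components after removing v_1, ..., v_k
    set S := {x : GkVertex k | ∀ i : Fin k, x ≠ Sum.inl (Fin.castLE (by omega) i)} with hS
    have hmemr : ∀ (j : Fin k) (a : Fin (k+2)), (Sum.inr (j,a) : GkVertex k) ∈ S := by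
      intro j a i' h; simp [hS] at h
    have hmeml : (Sum.inl (⟨k+2, by omega⟩ : Fin (k+3)) : GkVertex k) ∈ S := by
      intro i' h
      have hv := congrArg Fin.val (Sum.inl.inj h)
      simp at hv
      have := i'.isLt
      omega
    have step : ∀ (j : Fin k), ∀ ⦃x y : ↥S⦄, (∃ a, x.1 = Sum.inr (j, a)) →
        ((Gk k).induce S).Adj x y → ∃ a, y.1 = Sum.inr (j, a) := by
      rintro j ⟨x, hxS⟩ ⟨y, hyS⟩ ⟨a, ha⟩ hadj
      dsimp only at ha
      subst ha
      rcases gk_nbr (show (Gk k).Adj (Sum.inr (j,a)) y from hadj) with hy' | hy'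
      · exact hy'
      · exact absurd hy' (hyS j)
    have hconf : ∀ (j : Fin k) (y : ↥S),
        ((Gk k).induce S).Reachable ⟨Sum.inr (j,0), hmemr j 0⟩ y →
        ∃ a, y.1 = Sum.inr (j,a) :=
      fun j y h => walk_ind _ (step j) h ⟨0, rfl⟩
    have hbij : Function.Bijective
        (fun p : Fin (k+1) => Fin.lastCases
          (motive := fun _ => ((Gk k).induce S).ConnectedComponent)
          (((Gk k).induce S).connectedComponentMk ⟨Sum.inl ⟨k+2, by omega⟩, hmeml⟩)
          (fun j => ((Gk k).induce S).connectedComponentMk ⟨Sum.inr (j,0), hmemr j 0⟩) p) := by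
      constructor
      · intro p q
        induction p using Fin.lastCases with
        | last =>
          induction q using Fin.lastCases with
          | last => intro _; rfl
          | cast j =>
            intro heq
            simp only [Fin.lastCases_last, Fin.lastCases_castSucc] at heq
            obtain ⟨a, ha⟩ := hconf j _ (SimpleGraph.ConnectedComponent.exact heq).symm
            simp at ha
        | cast j =>
          induction q using Fin.lastCases with
          | last =>
            intro heq
            simp only [Fin.lastCases_last, Fin.lastCases_castSucc] at heq
            obtain ⟨a, ha⟩ := hconf j _ (SimpleGraph.ConnectedComponent.exact heq)
            simp at ha
          | cast j' =>
            intro heq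
            simp only [Fin.lastCases_castSucc] at heq
            obtain ⟨a, ha⟩ := hconf j _ (SimpleGraph.ConnectedComponent.exact heq)
            dsimp only at ha
            have hj : j' = j := congrArg Prod.fst (Sum.inr.inj ha)
            rw [hj]
      · intro c
        obtain ⟨⟨x, hxS⟩, rfl⟩ := c.exists_rep
        rcases x with u | ⟨j, a⟩
        · refine ⟨Fin.last k, ?_⟩
          simp only [Fin.lastCases_last]
          apply SimpleGraph.ConnectedComponent.sound
          by_cases h : u = ⟨k+2, by omega⟩
          · subst h
            exact SimpleGraph.Reachable.refl _
          · exact SimpleGraph.Adj.reachable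
              (show (Gk k).Adj (Sum.inl ⟨k+2, by omega⟩) (Sum.inl u) from
                gk_adj_inl_inl.mpr (Ne.symm h))
        · refine ⟨Fin.castSucc j, ?_⟩
          simp only [Fin.lastCases_castSucc]
          apply SimpleGraph.ConnectedComponent.sound
          by_cases h : a = 0
          · subst h
            exact SimpleGraph.Reachable.refl _
          · exact SimpleGraph.Adj.reachable
              (show (Gk k).Adj (Sum.inr (j,0)) (Sum.inr (j,a)) from
                gk_adj_inr_inr.mpr ⟨by simp [Ne.symm h], rfl⟩)
    rw [← Nat.card_eq_of_bijective _ hbij]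
    simp
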